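/- arXiv:2203.01222 — 2 statements merged into one kernel-verified Lean document; each statement's English description precedes it below -/
import Mathlib

section
/- Let μ be a Gaussian probability measure on the Euclidean space ℝⁿ (in the sense that the pushforward of μ under every continuous linear functional is a real Gaussian measure). Let G : ℝⁿ → ℝ be a continuous linear functional, let m = ∫ G x dμ(x) be its mean under μ, and let v = ∫ (G x − m)² dμ(x) be its variance; assume v > 0. Let p ∈ (0,1) and let ρ ∈ ℝ be the unique number with (gaussianReal 0 v)((−∞, ρ]) = p. Then for every q ∈ ℝ: μ({x : G x + q ≤ 0}) ≥ p if and only if m ≤ −q − ρ. -/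
open MeasureTheory ProbabilityTheory
open scoped NNReal ENNReal

open Real

lemma my_integrable_sq_mul_exp {b : ℝ} (hb : 0 < b) :
    Integrable fun x : ℝ => x ^ 2 * Real.exp (-b * x ^ 2) := by
  have h := integrable_rpow_mul_exp_neg_mul_sq hb (by norm_num : (-1:ℝ) < 2)
  refine h.congr (Filter.Eventually.of_forall fun x => ?_)
  have hx : x ^ (2:ℝ) = x ^ (2:ℕ) := by
    rw [← Real.rpow_natCast x 2]; norm_num
  simp [hx]

lemma my_integral_sq_mul_exp {b : ℝ} (hb : 0 < b) :
    ∫ x : ℝ, x ^ 2 * Real.exp (-b * x ^ 2) = (2 * b)⁻¹ * Real.sqrt (π / b) := by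
  have hderiv : ∀ x : ℝ, HasDerivAt (fun x : ℝ => x * Real.exp (-b * x ^ 2))
      (Real.exp (-b * x ^ 2) - 2 * b * (x ^ 2 * Real.exp (-b * x ^ 2))) x := by
    intro x
    have h1 : HasDerivAt (fun x : ℝ => -b * x ^ 2) (-b * (2 * x)) x := by
      simpa using ((hasDerivAt_pow 2 x).const_mul (-b))
    have h2 := h1.exp
    have h3 := (hasDerivAt_id' x).mul h2
    exact h3.congr_deriv (by ring)
  have hint : Integrable fun x : ℝ =>
      Real.exp (-b * x ^ 2) - 2 * b * (x ^ 2 * Real.exp (-b * x ^ 2)) :=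
    (integrable_exp_neg_mul_sq hb).sub ((my_integrable_sq_mul_exp hb).const_mul _)
  have h0 := integral_eq_zero_of_hasDerivAt_of_integrable hderiv hint
    (integrable_mul_exp_neg_mul_sq hb)
  rw [integral_sub (integrable_exp_neg_mul_sq hb)
    ((my_integrable_sq_mul_exp hb).const_mul _), integral_const_mul,
    integral_gaussian] at h0
  have hb' : (2 : ℝ) * b ≠ 0 := by positivity
  field_simp at h0 ⊢
  linarith

lemma my_integral_gaussianReal_eq {a : ℝ} {b : ℝ≥0} (hb : b ≠ 0) (g : ℝ → ℝ) :
    ∫ x, g x ∂(gaussianReal a b) = ∫ x, gaussianPDFReal a b x * g x := by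
  rw [gaussianReal_of_var_ne_zero a hb]
  have hd : (gaussianPDF a b) = fun x => ((gaussianPDFReal a b x).toNNReal : ℝ≥0∞) := rfl
  rw [hd, integral_withDensity_eq_integral_smul
    (measurable_gaussianPDFReal a b).real_toNNReal g]
  congr 1
  ext x
  simp [NNReal.smul_def, Real.coe_toNNReal _ (gaussianPDFReal_nonneg a b x)]

lemma my_integrable_gaussianReal_iff {a : ℝ} {b : ℝ≥0} (hb : b ≠ 0) (g : ℝ → ℝ) :
    Integrable g (gaussianReal a b) ↔
      Integrable (fun x => gaussianPDFReal a b x * g x) := by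
  rw [gaussianReal_of_var_ne_zero a hb]
  have hd : (gaussianPDF a b) = fun x => ((gaussianPDFReal a b x).toNNReal : ℝ≥0∞) := rfl
  rw [hd, integrable_withDensity_iff_integrable_smul
    (measurable_gaussianPDFReal a b).real_toNNReal]
  apply integrable_congr
  refine Filter.Eventually.of_forall fun x => ?_
  simp [NNReal.smul_def, Real.coe_toNNReal _ (gaussianPDFReal_nonneg a b x)]

lemma my_pdf0 {b : ℝ≥0} (x : ℝ) :
    gaussianPDFReal 0 b x = (Real.sqrt (2 * π * b))⁻¹ *
      Real.exp (-(2 * (b:ℝ))⁻¹ * x ^ 2) := by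
  by_cases hb : (b : ℝ) = 0
  · simp [gaussianPDFReal, hb]
  · have : -(x - 0) ^ 2 / (2 * (b:ℝ)) = -(2 * (b:ℝ))⁻¹ * x ^ 2 := by
      field_simp
      ring
    simp only [gaussianPDFReal]
    rw [this]

lemma my_integrable_id0 {b : ℝ≥0} (hb : b ≠ 0) :
    Integrable (fun x : ℝ => x) (gaussianReal 0 b) := by
  have hbpos : (0:ℝ) < b := by positivity
  have hc : (0:ℝ) < (2 * (b:ℝ))⁻¹ := by positivity
  rw [my_integrable_gaussianReal_iff hb]
  have := ((integrable_mul_exp_neg_mul_sq hc).const_mul (Real.sqrt (2 * π * b))⁻¹)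
  refine this.congr (Filter.Eventually.of_forall fun x => ?_)
  simp only [my_pdf0]; ring

lemma my_integrable_sq0 {b : ℝ≥0} (hb : b ≠ 0) :
    Integrable (fun x : ℝ => x ^ 2) (gaussianReal 0 b) := by
  have hbpos : (0:ℝ) < b := by positivity
  have hc : (0:ℝ) < (2 * (b:ℝ))⁻¹ := by positivity
  rw [my_integrable_gaussianReal_iff hb]
  have := ((my_integrable_sq_mul_exp hc).const_mul (Real.sqrt (2 * π * b))⁻¹)
  refine this.congr (Filter.Eventually.of_forall fun x => ?_)
  simp only [my_pdf0]; ring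

lemma my_mean0 {b : ℝ≥0} (hb : b ≠ 0) :
    ∫ x, x ∂(gaussianReal 0 b) = 0 := by
  rw [my_integral_gaussianReal_eq hb]
  have hodd : ∀ x : ℝ, gaussianPDFReal 0 b (-x) * (-x) = -(gaussianPDFReal 0 b x * x) := by
    intro x
    rw [my_pdf0, my_pdf0, neg_sq]
    ring
  have h := (integral_neg_eq_self (fun x => gaussianPDFReal 0 b x * x) volume).symm
  simp only [hodd, integral_neg] at h
  linarith

lemma my_mean (a : ℝ) (b : ℝ≥0) :
    ∫ x, x ∂(gaussianReal a b) = a := by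
  by_cases hb : b = 0
  · simp [hb, gaussianReal_zero_var, integral_dirac]
  · have hmap : (gaussianReal 0 b).map (· + a) = gaussianReal a b := by
      rw [gaussianReal_map_add_const]; norm_num
    rw [← hmap, integral_map (f := fun y : ℝ => y) (by fun_prop) measurable_id.aestronglyMeasurable]
    have h1 : ∫ x, (x + a) ∂(gaussianReal 0 b) =
        (∫ x, x ∂(gaussianReal 0 b)) + ∫ _, a ∂(gaussianReal 0 b) :=
      integral_add (my_integrable_id0 hb) (integrable_const a)
    rw [h1, my_mean0 hb, integral_const]
    simp

lemma my_var {b : ℝ≥0} (hb : b ≠ 0) (a : ℝ) :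
    ∫ x, (x - a) ^ 2 ∂(gaussianReal a b) = b := by
  have hbpos : (0:ℝ) < b := by positivity
  have hc : (0:ℝ) < (2 * (b:ℝ))⁻¹ := by positivity
  have hmap : (gaussianReal 0 b).map (· + a) = gaussianReal a b := by
    rw [gaussianReal_map_add_const]; norm_num
  rw [← hmap, integral_map (f := fun y : ℝ => (y - a) ^ 2) (by fun_prop)
    ((continuous_id.sub continuous_const).pow 2).aestronglyMeasurable]
  simp only [add_sub_cancel_right]
  rw [my_integral_gaussianReal_eq hb]
  have heq : ∀ x : ℝ, gaussianPDFReal 0 b x * x ^ 2 =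
      (Real.sqrt (2 * π * b))⁻¹ * (x ^ 2 * Real.exp (-(2 * (b:ℝ))⁻¹ * x ^ 2)) := by
    intro x; rw [my_pdf0]; ring
  simp only [heq]
  rw [integral_const_mul, my_integral_sq_mul_exp hc]
  have h2 : π / (2 * (b:ℝ))⁻¹ = 2 * π * b := by field_simp
  have h3 : (2 * (2 * (b:ℝ))⁻¹)⁻¹ * Real.sqrt (2 * π * b) ≠ 0 := by
    have : (0:ℝ) < 2 * π * b := by positivity
    positivity
  rw [h2]
  have hs : (0:ℝ) < Real.sqrt (2 * π * b) := Real.sqrt_pos.mpr (by positivity)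
  field_simp

lemma my_Iic_lt {b : ℝ≥0} (hb : b ≠ 0) {s t : ℝ} (hst : s < t) :
    gaussianReal 0 b (Set.Iic s) < gaussianReal 0 b (Set.Iic t) := by
  have hsplit : Set.Iic t = Set.Iic s ∪ Set.Ioc s t := (Set.Iic_union_Ioc_eq_Iic hst.le).symm
  have hdisj : Disjoint (Set.Iic s) (Set.Ioc s t) := by
    simp [Set.disjoint_left]
    intro x hx hx'
    linarith
  rw [hsplit, measure_union hdisj measurableSet_Ioc]
  have hpos : 0 < gaussianReal 0 b (Set.Ioc s t) := by
    rw [gaussianReal_apply 0 hb]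
    by_contra h
    push_neg at h
    have h0 : ∫⁻ x in Set.Ioc s t, gaussianPDF 0 b x = 0 := le_antisymm h zero_le
    have hae := (setLIntegral_eq_zero_iff measurableSet_Ioc (measurable_gaussianPDF 0 b)).mp h0
    have hsub : (Set.Ioc s t : Set ℝ) ⊆
        {x | ¬ (x ∈ Set.Ioc s t → gaussianPDF 0 b x = 0)} := by
      intro x hx
      simp only [Set.mem_setOf_eq, not_forall]
      exact ⟨hx, (gaussianPDF_pos 0 hb x).ne'⟩
    have hnull := measure_mono_null hsub (ae_iff.mp hae)
    have hts : (0:ℝ) < t - s := by linarith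
    rw [Real.volume_Ioc] at hnull
    simp [ENNReal.ofReal_eq_zero, not_le] at hnull
    linarith
  have hfin : gaussianReal 0 b (Set.Iic s) ≠ ⊤ := measure_ne_top _ _
  exact ENNReal.lt_add_right hfin hpos.ne'

/-- Chance-constraint reformulation for a Gaussian measure on `ℝⁿ`: if `μ` is Gaussian (the
pushforward under every continuous linear functional is a real Gaussian measure), `G` is a
continuous linear functional with mean `m` and variance `v > 0` under `μ`, and `ρ` is the
`p`-quantile of the centered Gaussian with variance `v`, then
`μ {x : G x + q ≤ 0} ≥ p ↔ m ≤ −q − ρ`. -/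
theorem gaussian_linear_chance_constraint_iff {n : ℕ}
    (μ : Measure (EuclideanSpace ℝ (Fin n))) [IsProbabilityMeasure μ]
    (hgauss : ∀ L : EuclideanSpace ℝ (Fin n) →L[ℝ] ℝ,
      ∃ (a : ℝ) (b : ℝ≥0), μ.map L = gaussianReal a b)
    (G : EuclideanSpace ℝ (Fin n) →L[ℝ] ℝ)
    (m v : ℝ)
    (hm : m = ∫ x, G x ∂μ)
    (hv : v = ∫ x, (G x - m) ^ 2 ∂μ)
    (hvpos : 0 < v)
    (p : ℝ) (hp0 : 0 < p) (hp1 : p < 1)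
    (ρ : ℝ) (hρ : gaussianReal 0 v.toNNReal (Set.Iic ρ) = ENNReal.ofReal p) :
    ∀ q : ℝ, ENNReal.ofReal p ≤ μ {x | G x + q ≤ 0} ↔ m ≤ -q - ρ := by
  obtain ⟨a, b, hab⟩ := hgauss G
  have hGm : Measurable G := G.continuous.measurable
  have hma : m = a := by
    rw [hm, ← integral_map hGm.aemeasurable (f := fun y : ℝ => y) measurable_id.aestronglyMeasurable,
      hab, my_mean]
  have hva : v = ∫ y, (y - m) ^ 2 ∂(gaussianReal a b) := by
    rw [hv, ← hab, integral_map hGm.aemeasurable (f := fun y : ℝ => (y - m) ^ 2)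
      ((continuous_id.sub continuous_const).pow 2).aestronglyMeasurable]
  have hb : b ≠ 0 := by
    intro hb0
    rw [hb0, gaussianReal_zero_var] at hva
    rw [integral_dirac, hma] at hva
    simp at hva
    exact absurd hva hvpos.ne'
  have hvb : v = (b : ℝ) := by rw [hva, hma, my_var hb]
  have hvt : v.toNNReal = b := by
    ext; rw [Real.coe_toNNReal _ hvpos.le]; exact hvb
  intro q
  have hset : {x : EuclideanSpace ℝ (Fin n) | G x + q ≤ 0} = G ⁻¹' (Set.Iic (-q)) := by
    ext x
    simp only [Set.mem_setOf_eq, Set.mem_preimage, Set.mem_Iic]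
    constructor <;> intro <;> linarith
  have hmeas : μ {x | G x + q ≤ 0} = gaussianReal 0 b (Set.Iic (-q - a)) := by
    have hmap : (gaussianReal 0 b).map (· + a) = gaussianReal a b := by
      rw [gaussianReal_map_add_const]; norm_num
    rw [hset, ← Measure.map_apply hGm measurableSet_Iic, hab, ← hmap,
      Measure.map_apply (by fun_prop) measurableSet_Iic]
    congr 1
    ext x
    simp only [Set.mem_preimage, Set.mem_Iic]
    constructor <;> intro <;> linarith
  rw [hmeas, ← hρ, hvt]
  constructor
  · intro h
    by_contra hc
    push_neg at hc
    have : -q - a < ρ := by rw [hma] at hc; linarith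
    exact absurd h (not_le.mpr (my_Iic_lt hb this))
  · intro h
    have : ρ ≤ -q - a := by rw [hma] at h; linarith
    exact measure_mono (Set.Iic_subset_Iic.mpr this)
end

section
/- (One-stage separation principle for linear-quadratic stochastic games with shared measurements.) Adopt the setting of the one-stage cost reformulation: y is an ℝᶻ-valued measurement, x₀ = x̂(y) + e with x̂ : ℝᶻ → ℝⁿ measurable, e independent of y with mean zero and covariance Σ_e, and w independent of (y, e) with mean zero and covariance Σ_w; the next state is x₁ = A x₀ + Σⱼ Bⱼ uⱼ + w; player i's cost for measurable square-integrable strategies γⱼ : ℝᶻ → ℝ^{mⱼ} is Jᵢ(γ₁,…,γ_N) = E[½ x₁ᵀ Qᵢ x₁ + lᵢᵀ x₁ + Σⱼ (½ γⱼ(y)ᵀ Rᵢⱼ γⱼ(y) + rᵢⱼᵀ γⱼ(y))], assumed well-defined for the strategies considered, with Qᵢ symmetric. Define the associated deterministic one-stage game with exact state s ∈ ℝⁿ by the costs Ĵᵢ(s, u₁,…,u_N) = ½ z(s,u)ᵀ Qᵢ z(s,u) + lᵢᵀ z(s,u) + Σⱼ (½ uⱼᵀ Rᵢⱼ uⱼ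 + rᵢⱼᵀ uⱼ), where z(s,u) = A s + Σⱼ Bⱼ uⱼ. Suppose δᵢ* : ℝⁿ → ℝ^{mᵢ} are measurable maps such that for every s ∈ ℝⁿ the action profile (δ₁*(s),…,δ_N*(s)) is a Nash equilibrium of the deterministic game with costs (Ĵ₁(s,·),…,Ĵ_N(s,·)), and such that the strategies γᵢ* := δᵢ* ∘ x̂ are square-integrable under the law of y. Then (γ₁*,…,γ_N*) is a Nash equilibrium of the stochastic game with costs (J₁,…,J_N): for every player i and every admissible measurable strategy γᵢ, Jᵢ(γ₁*,…,γᵢ*,…,γ_N*) ≤ Jᵢ(γ₁*,…,γᵢ,…,γ_N*). -/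
open MeasureTheory ProbabilityTheory Matrix
open scoped BigOperators

/-- Cost of player with data `(Q, l, R, r)` in the deterministic one-stage game with exact
state `s` and action profile `u`: `½ z Q z + lᵀ z + Σⱼ (½ uⱼᵀ Rⱼ uⱼ + rⱼᵀ uⱼ)` where
`z = A s + Σⱼ Bⱼ uⱼ`. -/
noncomputable def detStageCost {n N : ℕ} {m : Fin N → ℕ}
    (A : Matrix (Fin n) (Fin n) ℝ)
    (B : ∀ j : Fin N, Matrix (Fin n) (Fin (m j)) ℝ)
    (Q : Matrix (Fin n) (Fin n) ℝ) (l : Fin n → ℝ)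
    (R : ∀ j : Fin N, Matrix (Fin (m j)) (Fin (m j)) ℝ)
    (r : ∀ j : Fin N, Fin (m j) → ℝ)
    (s : Fin n → ℝ) (u : ∀ j : Fin N, Fin (m j) → ℝ) : ℝ :=
  let zd := A.mulVec s + ∑ j, (B j).mulVec (u j)
  (1 / 2) * (zd ⬝ᵥ Q.mulVec zd) + (l ⬝ᵥ zd)
    + ∑ j, ((1 / 2) * (u j ⬝ᵥ (R j).mulVec (u j)) + (r j ⬝ᵥ u j))

/-- Expected cost of player with data `(Q, l, R, r)` in the one-stage stochastic game with state
`x₀ = x̂(y) + e`, next state `x₁ = A x₀ + Σⱼ Bⱼ σⱼ(y) + w` and measurable strategies `σⱼ` of the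
shared measurement `y`. -/
noncomputable def stochStageCost {Ω : Type*} [MeasurableSpace Ω] (P : Measure Ω)
    {z n N : ℕ} {m : Fin N → ℕ}
    (y : Ω → Fin z → ℝ) (xhat : (Fin z → ℝ) → (Fin n → ℝ)) (e w : Ω → Fin n → ℝ)
    (A : Matrix (Fin n) (Fin n) ℝ)
    (B : ∀ j : Fin N, Matrix (Fin n) (Fin (m j)) ℝ)
    (Q : Matrix (Fin n) (Fin n) ℝ) (l : Fin n → ℝ)
    (R : ∀ j : Fin N, Matrix (Fin (m j)) (Fin (m j)) ℝ)
    (r : ∀ j : Fin N, Fin (m j) → ℝ)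
    (σ : ∀ j : Fin N, (Fin z → ℝ) → (Fin (m j) → ℝ)) : ℝ :=
  ∫ ω,
    (let x₁ := A.mulVec (xhat (y ω) + e ω) + (∑ j, (B j).mulVec (σ j (y ω))) + w ω
     (1 / 2) * (x₁ ⬝ᵥ Q.mulVec x₁) + (l ⬝ᵥ x₁)
       + ∑ j, ((1 / 2) * (σ j (y ω) ⬝ᵥ (R j).mulVec (σ j (y ω))) + (r j ⬝ᵥ σ j (y ω)))) ∂P

section SepAux

open MeasureTheory ProbabilityTheory Matrix

variable {Ω : Type*} [MeasurableSpace Ω] {P : Measure Ω}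

lemma sep_mul_int [IsFiniteMeasure P] {f g : Ω → ℝ} (hf : MemLp f 2 P) (hg : MemLp g 2 P) :
    Integrable (fun ω => f ω * g ω) P := by
  have h : MemLp (f • g) 1 P := hg.smul hf
    (hpqr := ⟨by rw [inv_one, ENNReal.inv_two_add_inv_two]⟩)
  exact (h.integrable le_rfl).congr (Filter.Eventually.of_forall fun ω => by simp [smul_eq_mul])

lemma sep_int_dot_mulVec [IsFiniteMeasure P] {k1 k2 : ℕ} (M : Matrix (Fin k1) (Fin k2) ℝ)
    {f : Ω → Fin k1 → ℝ} {g : Ω → Fin k2 → ℝ}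
    (hf : ∀ a, MemLp (fun ω => f ω a) 2 P) (hg : ∀ b, MemLp (fun ω => g ω b) 2 P) :
    Integrable (fun ω => f ω ⬝ᵥ M.mulVec (g ω)) P := by
  have h : (fun ω => f ω ⬝ᵥ M.mulVec (g ω))
      = fun ω => ∑ a, ∑ b, M a b * (f ω a * g ω b) := by
    funext ω
    simp only [dotProduct, Matrix.mulVec, Finset.mul_sum]
    exact Finset.sum_congr rfl fun a _ => Finset.sum_congr rfl fun b _ => by ring
  rw [h]
  exact integrable_finset_sum _ fun a _ => integrable_finset_sum _ fun b _ =>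
    (sep_mul_int (hf a) (hg b)).const_mul _

lemma sep_int_dot_const [IsFiniteMeasure P] {k : ℕ} (c : Fin k → ℝ) {f : Ω → Fin k → ℝ}
    (hf : ∀ a, MemLp (fun ω => f ω a) 2 P) :
    Integrable (fun ω => c ⬝ᵥ f ω) P := by
  have h : (fun ω => c ⬝ᵥ f ω) = fun ω => ∑ a, c a * f ω a := by
    funext ω; simp [dotProduct]
  rw [h]
  exact integrable_finset_sum _ fun a _ => ((hf a).integrable one_le_two).const_mul _

lemma sep_memℒp_mulVec {k1 k2 : ℕ} (M : Matrix (Fin k1) (Fin k2) ℝ)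
    {f : Ω → Fin k2 → ℝ} (hf : ∀ b, MemLp (fun ω => f ω b) 2 P) (a : Fin k1) :
    MemLp (fun ω => M.mulVec (f ω) a) 2 P := by
  have h : (fun ω => M.mulVec (f ω) a) = fun ω => ∑ b, M a b * f ω b := by
    funext ω; simp [Matrix.mulVec, dotProduct]
  rw [h]
  exact memLp_finset_sum _ fun b _ => (hf b).const_mul _

lemma sep_dot_symm {k : ℕ} {Q : Matrix (Fin k) (Fin k) ℝ} (hQ : Q.IsSymm) (a b : Fin k → ℝ) :
    a ⬝ᵥ Q.mulVec b = b ⬝ᵥ Q.mulVec a := by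
  simp only [dotProduct, Matrix.mulVec, Finset.mul_sum]
  rw [Finset.sum_comm]
  exact Finset.sum_congr rfl fun p _ => Finset.sum_congr rfl fun q _ => by
    rw [hQ.apply p q]; ring

end SepAux

/-- One-stage separation principle for linear-quadratic stochastic games with shared
measurements: if `δᵢ*` gives, for every exact state `s`, a Nash equilibrium of the deterministic
one-stage game, then the strategies `γᵢ* = δᵢ* ∘ x̂` (the deterministic equilibrium applied to the
estimated state) form a Nash equilibrium of the stochastic game: no player can lower their
expected cost by unilaterally deviating to any measurable square-integrable strategy. -/
theorem one_stage_separation_principle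
    {Ω : Type*} [MeasurableSpace Ω] (P : Measure Ω) [IsProbabilityMeasure P]
    {z n N : ℕ} {m : Fin N → ℕ}
    (y : Ω → Fin z → ℝ) (hy : Measurable y)
    (xhat : (Fin z → ℝ) → (Fin n → ℝ)) (hxhat : Measurable xhat)
    (hxhatL2 : ∀ i, MemLp (fun ω => xhat (y ω) i) 2 P)
    (e w : Ω → Fin n → ℝ) (he : Measurable e) (hw : Measurable w)
    (heL2 : ∀ i, MemLp (fun ω => e ω i) 2 P)
    (hwL2 : ∀ i, MemLp (fun ω => w ω i) 2 P)
    (h_e_indep_y : IndepFun e y P)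
    (h_w_indep_ye : IndepFun w (fun ω => (y ω, e ω)) P)
    (he0 : ∀ i, ∫ ω, e ω i ∂P = 0) (hw0 : ∀ i, ∫ ω, w ω i ∂P = 0)
    (Se Sw : Matrix (Fin n) (Fin n) ℝ)
    (hSe : ∀ i j, Se i j = ∫ ω, e ω i * e ω j ∂P)
    (hSw : ∀ i j, Sw i j = ∫ ω, w ω i * w ω j ∂P)
    (A : Matrix (Fin n) (Fin n) ℝ)
    (B : ∀ j : Fin N, Matrix (Fin n) (Fin (m j)) ℝ)
    (Q : Fin N → Matrix (Fin n) (Fin n) ℝ) (hQ : ∀ i, (Q i).IsSymm)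
    (l : Fin N → Fin n → ℝ)
    (R : ∀ _i : Fin N, ∀ j : Fin N, Matrix (Fin (m j)) (Fin (m j)) ℝ)
    (r : ∀ _i : Fin N, ∀ j : Fin N, Fin (m j) → ℝ)
    -- the pointwise deterministic Nash equilibrium strategies
    (δ : ∀ i : Fin N, (Fin n → ℝ) → (Fin (m i) → ℝ))
    (hδmeas : ∀ i, Measurable (δ i))
    (hδL2 : ∀ i k, MemLp (fun ω => δ i (xhat (y ω)) k) 2 P)
    (hNashPt : ∀ (s : Fin n → ℝ) (i : Fin N) (u : Fin (m i) → ℝ),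
      detStageCost A B (Q i) (l i) (R i) (r i) s (fun j => δ j s)
        ≤ detStageCost A B (Q i) (l i) (R i) (r i) s
            (Function.update (fun j => δ j s) i u)) :
    ∀ (i : Fin N) (γ : (Fin z → ℝ) → Fin (m i) → ℝ),
      Measurable γ → (∀ k, MemLp (fun ω => γ (y ω) k) 2 P) →
      stochStageCost P y xhat e w A B (Q i) (l i) (R i) (r i)
          (fun j s => δ j (xhat s))
        ≤ stochStageCost P y xhat e w A B (Q i) (l i) (R i) (r i)
            (Function.update (fun j s => δ j (xhat s)) i γ) := by
  intro i γ hγmeas hγL2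
  classical
  set σs : ∀ j : Fin N, (Fin z → ℝ) → Fin (m j) → ℝ := fun j s => δ j (xhat s) with hσs
  set σd := Function.update σs i γ with hσd
  have hσsmeas : ∀ j, Measurable (σs j) := fun j => (hδmeas j).comp hxhat
  have hσsL2 : ∀ j k, MemLp (fun ω => σs j (y ω) k) 2 P := fun j k => hδL2 j k
  have hσdmeas : ∀ j, Measurable (σd j) := by
    intro j
    rcases eq_or_ne j i with rfl | h
    · simpa [hσd] using hγmeas
    · rw [hσd, Function.update_of_ne h]; exact hσsmeas j
  have hσdL2 : ∀ j k, MemLp (fun ω => σd j (y ω) k) 2 P := by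
    intro j k
    rcases eq_or_ne j i with rfl | h
    · simpa [hσd] using hγL2 k
    · rw [hσd, Function.update_of_ne h]; exact hσsL2 j k
  set v : Ω → Fin n → ℝ := fun ω => A.mulVec (e ω) + w ω with hv
  have hvL2 : ∀ a, MemLp (fun ω => v ω a) 2 P := by
    intro a
    have hfun : (fun ω => v ω a) = fun ω => A.mulVec (e ω) a + w ω a := by
      funext ω; simp [hv]
    rw [hfun]
    exact (sep_memℒp_mulVec A heL2 a).add (hwL2 a)
  have key : ∀ (σ : ∀ j : Fin N, (Fin z → ℝ) → Fin (m j) → ℝ),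
      (∀ j, Measurable (σ j)) → (∀ j k, MemLp (fun ω => σ j (y ω) k) 2 P) →
      Integrable (fun ω =>
          detStageCost A B (Q i) (l i) (R i) (r i) (xhat (y ω)) (fun j => σ j (y ω))) P ∧
      stochStageCost P y xhat e w A B (Q i) (l i) (R i) (r i) σ
        = (∫ ω, detStageCost A B (Q i) (l i) (R i) (r i) (xhat (y ω)) (fun j => σ j (y ω)) ∂P)
          + ∫ ω, ((1 / 2) * (v ω ⬝ᵥ (Q i).mulVec (v ω)) + (l i ⬝ᵥ v ω)) ∂P := by
    intro σ hσm hσ2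
    set g : (Fin z → ℝ) → Fin n → ℝ :=
      fun t => A.mulVec (xhat t) + ∑ j, (B j).mulVec (σ j t) with hg
    have hgmeas : ∀ a, Measurable fun t => g t a := by
      intro a
      simp only [hg, Pi.add_apply, Finset.sum_apply, Matrix.mulVec, dotProduct]
      exact (Finset.measurable_sum _ fun k _ =>
          measurable_const.mul ((measurable_pi_apply k).comp hxhat)).add
        (Finset.measurable_sum _ fun j _ => Finset.measurable_sum _ fun k _ =>
          measurable_const.mul ((measurable_pi_apply k).comp (hσm j)))
    have hzdL2 : ∀ a, MemLp (fun ω => g (y ω) a) 2 P := by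
      intro a
      have hfun : (fun ω => g (y ω) a)
          = fun ω => A.mulVec (xhat (y ω)) a + ∑ j, (B j).mulVec (σ j (y ω)) a := by
        funext ω; simp [hg]
      rw [hfun]
      exact (sep_memℒp_mulVec A hxhatL2 a).add
        (memLp_finset_sum _ fun j _ => sep_memℒp_mulVec (B j) (hσ2 j) a)
    have hcross0 : ∀ (a b : Fin n), ∫ ω, g (y ω) a * v ω b ∂P = 0 := by
      intro a b
      have hzae : AEStronglyMeasurable (fun ω => g (y ω) a) P :=
        ((hgmeas a).comp hy).aestronglyMeasurable
      have he0' : ∀ k : Fin n, ∫ ω, g (y ω) a * e ω k ∂P = 0 := by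
        intro k
        have hind : IndepFun (fun ω => g (y ω) a) (fun ω => e ω k) P :=
          (h_e_indep_y.comp (measurable_pi_apply k) (hgmeas a)).symm
        rw [hind.integral_fun_mul_eq_mul_integral hzae ((measurable_pi_apply k).comp he).aestronglyMeasurable,
          he0 k, mul_zero]
      have hw0' : ∫ ω, g (y ω) a * w ω b ∂P = 0 := by
        have hind : IndepFun (fun ω => g (y ω) a) (fun ω => w ω b) P :=
          (h_w_indep_ye.comp (measurable_pi_apply b) ((hgmeas a).comp measurable_fst)).symm
        rw [hind.integral_fun_mul_eq_mul_integral hzae ((measurable_pi_apply b).comp hw).aestronglyMeasurable,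
          hw0 b, mul_zero]
      have hsplit : (fun ω => g (y ω) a * v ω b)
          = fun ω => (∑ k, A b k * (g (y ω) a * e ω k)) + g (y ω) a * w ω b := by
        funext ω
        simp only [hv, Pi.add_apply]
        rw [mul_add]
        congr 1
        simp only [Matrix.mulVec, dotProduct, Finset.mul_sum]
        exact Finset.sum_congr rfl fun k _ => by ring
      rw [hsplit, integral_add
          (integrable_finset_sum _ fun k _ => (sep_mul_int (hzdL2 a) (heL2 k)).const_mul _)
          (sep_mul_int (hzdL2 a) (hwL2 b)),
        integral_finset_sum _ fun k _ => (sep_mul_int (hzdL2 a) (heL2 k)).const_mul _]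
      rw [hw0', add_zero]
      refine Finset.sum_eq_zero fun k _ => ?_
      rw [integral_const_mul, he0' k, mul_zero]
    have hID : Integrable (fun ω =>
        detStageCost A B (Q i) (l i) (R i) (r i) (xhat (y ω)) (fun j => σ j (y ω))) P := by
      have hfun : (fun ω =>
          detStageCost A B (Q i) (l i) (R i) (r i) (xhat (y ω)) (fun j => σ j (y ω)))
          = fun ω => (1 / 2) * (g (y ω) ⬝ᵥ (Q i).mulVec (g (y ω))) + (l i ⬝ᵥ g (y ω))
              + ∑ j, ((1 / 2) * (σ j (y ω) ⬝ᵥ (R i j).mulVec (σ j (y ω)))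
                  + (r i j ⬝ᵥ σ j (y ω))) := by
        funext ω; simp only [detStageCost, hg]
      rw [hfun]
      exact (((sep_int_dot_mulVec (Q i) hzdL2 hzdL2).const_mul _).add
          (sep_int_dot_const (l i) hzdL2)).add
        (integrable_finset_sum _ fun j _ =>
          ((sep_int_dot_mulVec (R i j) (hσ2 j) (hσ2 j)).const_mul _).add
            (sep_int_dot_const (r i j) (hσ2 j)))
    have hIX : Integrable (fun ω => g (y ω) ⬝ᵥ (Q i).mulVec (v ω)) P :=
      sep_int_dot_mulVec (Q i) hzdL2 hvL2
    have hIK : Integrable (fun ω => (1 / 2) * (v ω ⬝ᵥ (Q i).mulVec (v ω)) + (l i ⬝ᵥ v ω)) P :=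
      ((sep_int_dot_mulVec (Q i) hvL2 hvL2).const_mul _).add (sep_int_dot_const (l i) hvL2)
    have hX0 : ∫ ω, g (y ω) ⬝ᵥ (Q i).mulVec (v ω) ∂P = 0 := by
      have hfun : (fun ω => g (y ω) ⬝ᵥ (Q i).mulVec (v ω))
          = fun ω => ∑ a, ∑ b, (Q i) a b * (g (y ω) a * v ω b) := by
        funext ω
        simp only [dotProduct, Matrix.mulVec, Finset.mul_sum]
        exact Finset.sum_congr rfl fun a _ => Finset.sum_congr rfl fun b _ => by ring
      rw [hfun, integral_finset_sum (f := fun a ω => ∑ b, (Q i) a b * (g (y ω) a * v ω b)) _ fun a _ => integrable_finset_sum _ fun b _ =>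
        (sep_mul_int (hzdL2 a) (hvL2 b)).const_mul _]
      refine Finset.sum_eq_zero fun a _ => ?_
      rw [integral_finset_sum _ fun b _ => (sep_mul_int (hzdL2 a) (hvL2 b)).const_mul _]
      refine Finset.sum_eq_zero fun b _ => ?_
      rw [integral_const_mul, hcross0 a b, mul_zero]
    have hpt : ∀ ω : Ω,
        (1 / 2) * ((A.mulVec (xhat (y ω) + e ω) + (∑ j, (B j).mulVec (σ j (y ω))) + w ω) ⬝ᵥ
            (Q i).mulVec (A.mulVec (xhat (y ω) + e ω) + (∑ j, (B j).mulVec (σ j (y ω))) + w ω))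
          + (l i ⬝ᵥ (A.mulVec (xhat (y ω) + e ω) + (∑ j, (B j).mulVec (σ j (y ω))) + w ω))
          + ∑ j, ((1 / 2) * (σ j (y ω) ⬝ᵥ (R i j).mulVec (σ j (y ω))) + (r i j ⬝ᵥ σ j (y ω)))
        = detStageCost A B (Q i) (l i) (R i) (r i) (xhat (y ω)) (fun j => σ j (y ω))
          + g (y ω) ⬝ᵥ (Q i).mulVec (v ω)
          + ((1 / 2) * (v ω ⬝ᵥ (Q i).mulVec (v ω)) + (l i ⬝ᵥ v ω)) := by
      intro ω
      have hx : A.mulVec (xhat (y ω) + e ω) + (∑ j, (B j).mulVec (σ j (y ω))) + w ω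
          = g (y ω) + v ω := by
        simp only [hg, hv, Matrix.mulVec_add]
        abel
      rw [hx]
      simp only [detStageCost, hg, Matrix.mulVec_add, dotProduct_add, add_dotProduct]
      rw [sep_dot_symm (hQ i) (v ω) (A.mulVec (xhat (y ω))),
        sep_dot_symm (hQ i) (v ω) (∑ j, (B j).mulVec (σ j (y ω)))]
      ring
    refine ⟨hID, ?_⟩
    have hfun : stochStageCost P y xhat e w A B (Q i) (l i) (R i) (r i) σ
        = ∫ ω, (detStageCost A B (Q i) (l i) (R i) (r i) (xhat (y ω)) (fun j => σ j (y ω))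
            + g (y ω) ⬝ᵥ (Q i).mulVec (v ω)
            + ((1 / 2) * (v ω ⬝ᵥ (Q i).mulVec (v ω)) + (l i ⬝ᵥ v ω))) ∂P := by
      simp only [stochStageCost]
      exact integral_congr_ae (Filter.Eventually.of_forall fun ω => hpt ω)
    have hIDX : Integrable (fun ω =>
        detStageCost A B (Q i) (l i) (R i) (r i) (xhat (y ω)) (fun j => σ j (y ω))
          + g (y ω) ⬝ᵥ (Q i).mulVec (v ω)) P := hID.add hIX
    rw [hfun, integral_add hIDX hIK, integral_add hID hIX, hX0, add_zero]
  obtain ⟨hIDs, hEs⟩ := key σs hσsmeas hσsL2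
  obtain ⟨hIDd, hEd⟩ := key σd hσdmeas hσdL2
  rw [hEs, hEd]
  refine add_le_add_left (integral_mono hIDs hIDd fun ω => ?_) _
  show detStageCost A B (Q i) (l i) (R i) (r i) (xhat (y ω)) (fun j => σs j (y ω))
      ≤ detStageCost A B (Q i) (l i) (R i) (r i) (xhat (y ω)) (fun j => σd j (y ω))
  have h1 : (fun j => σd j (y ω))
      = Function.update (fun j => δ j (xhat (y ω))) i (γ (y ω)) := by
    funext j
    exact Function.apply_update
      (fun j (h : (Fin z → ℝ) → Fin (m j) → ℝ) => h (y ω)) σs i γ j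
  rw [h1]
  exact hNashPt (xhat (y ω)) i (γ (y ω))
end
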